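/- arXiv:2503.20987 — 2 statements merged into one kernel-verified Lean document; each statement's English description precedes it below -/
import Mathlib

section
/- Let P₀, P₁, …, P_T be probability measures on ℝ² with finite first moments, let err_i(f) := E_{P_i}[|a − r|] denote the expected absolute error under P_i, and let λ* := min over f in some family Ω (assume the minimum is attained) of (1/T)·Σ_{i=1}^{T} err_i(f) + err_0(f). Then for every f ∈ Ω: err_0(f) ≤ (1/T)·Σ_{i=1}^{T} err_i(f) + (1/T)·Σ_{i=1}^{T} W¹(P₀, P_i) + 2λ*, where W¹ is the order-1 Wasserstein distance induced by the ℓ¹-norm on ℝ². -/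
open MeasureTheory

/-- Order-1 Wasserstein distance between measures on ℝ², induced by the ℓ¹-norm. -/
noncomputable def W1 (P Q : Measure (ℝ × ℝ)) : ℝ :=
  sInf { c : ℝ | ∃ π : Measure ((ℝ × ℝ) × (ℝ × ℝ)),
    π.map Prod.fst = P ∧ π.map Prod.snd = Q ∧
    c = ∫ z, (|z.1.1 - z.2.1| + |z.1.2 - z.2.2|) ∂π }

private lemma abs_diff_meas : Measurable (fun p : ℝ × ℝ => |p.1 - p.2|) :=
  (measurable_fst.sub measurable_snd).abs

private lemma abs_sum_meas : Measurable (fun p : ℝ × ℝ => |p.1| + |p.2|) :=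
  (measurable_fst.abs.add measurable_snd.abs)

private lemma integrable_abs_diff {Q : Measure (ℝ × ℝ)}
    (h : Integrable (fun p => |p.1| + |p.2|) Q) :
    Integrable (fun p : ℝ × ℝ => |p.1 - p.2|) Q := by
  refine h.mono' abs_diff_meas.aestronglyMeasurable ?_
  filter_upwards with p
  rw [Real.norm_eq_abs, abs_abs]
  exact abs_sub _ _

private lemma W1_key (Pm Qm : Measure (ℝ × ℝ)) [IsProbabilityMeasure Pm]
    [IsProbabilityMeasure Qm]
    (hPi : Integrable (fun p => |p.1| + |p.2|) Pm)
    (hQi : Integrable (fun p => |p.1| + |p.2|) Qm) :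
    (∫ p, |p.1 - p.2| ∂Pm) ≤ (∫ p, |p.1 - p.2| ∂Qm) + W1 Pm Qm := by
  have key : (∫ p, |p.1 - p.2| ∂Pm) - (∫ p, |p.1 - p.2| ∂Qm) ≤ W1 Pm Qm := by
    apply le_csInf
    · -- nonempty: product coupling
      refine ⟨_, Pm.prod Qm, ?_, ?_, rfl⟩
      · simp [Measure.map_fst_prod]
      · simp [Measure.map_snd_prod]
    · rintro c ⟨π, h1, h2, rfl⟩
      have hfst : AEMeasurable (Prod.fst : (ℝ × ℝ) × (ℝ × ℝ) → ℝ × ℝ) π :=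
        measurable_fst.aemeasurable
      have hsnd : AEMeasurable (Prod.snd : (ℝ × ℝ) × (ℝ × ℝ) → ℝ × ℝ) π :=
        measurable_snd.aemeasurable
      -- integrabilities
      have hg1 : Integrable (fun z : (ℝ × ℝ) × (ℝ × ℝ) => |z.1.1 - z.1.2|) π := by
        have := (integrable_map_measure
          (abs_diff_meas.aestronglyMeasurable) hfst).mp (by rw [h1]; exact integrable_abs_diff hPi)
        simpa [Function.comp_def] using this
      have hg2 : Integrable (fun z : (ℝ × ℝ) × (ℝ × ℝ) => |z.2.1 - z.2.2|) π := by
        have := (integrable_map_measure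
          (abs_diff_meas.aestronglyMeasurable) hsnd).mp (by rw [h2]; exact integrable_abs_diff hQi)
        simpa [Function.comp_def] using this
      have hm1 : Integrable (fun z : (ℝ × ℝ) × (ℝ × ℝ) => |z.1.1| + |z.1.2|) π := by
        have := (integrable_map_measure
          (abs_sum_meas.aestronglyMeasurable) hfst).mp (by rw [h1]; exact hPi)
        simpa [Function.comp_def] using this
      have hm2 : Integrable (fun z : (ℝ × ℝ) × (ℝ × ℝ) => |z.2.1| + |z.2.2|) π := by
        have := (integrable_map_measure
          (abs_sum_meas.aestronglyMeasurable) hsnd).mp (by rw [h2]; exact hQi)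
        simpa [Function.comp_def] using this
      have hcost : Integrable
          (fun z : (ℝ × ℝ) × (ℝ × ℝ) => |z.1.1 - z.2.1| + |z.1.2 - z.2.2|) π := by
        refine (hm1.add hm2).mono' ?_ ?_
        · exact (((measurable_fst.fst.sub measurable_snd.fst).abs).add
            ((measurable_fst.snd.sub measurable_snd.snd).abs)).aestronglyMeasurable
        · filter_upwards with z
          have h1' := abs_sub z.1.1 z.2.1
          have h2' := abs_sub z.1.2 z.2.2
          have := abs_nonneg (z.1.1 - z.2.1)
          have := abs_nonneg (z.1.2 - z.2.2)
          rw [Real.norm_eq_abs, abs_of_nonneg (by positivity)]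
          simp only [Pi.add_apply]
          linarith
      -- rewrite the marginal integrals as integrals over π
      have e1 : (∫ p, |p.1 - p.2| ∂Pm)
          = ∫ z, |z.1.1 - z.1.2| ∂π := by
        rw [← h1, integral_map hfst abs_diff_meas.aestronglyMeasurable]
      have e2 : (∫ p, |p.1 - p.2| ∂Qm)
          = ∫ z, |z.2.1 - z.2.2| ∂π := by
        rw [← h2, integral_map hsnd abs_diff_meas.aestronglyMeasurable]
      rw [e1, e2]
      have hmono : (∫ z, |z.1.1 - z.1.2| ∂π)
          ≤ ∫ z, ((|z.1.1 - z.2.1| + |z.1.2 - z.2.2|) + |z.2.1 - z.2.2|) ∂π := by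
        refine integral_mono hg1 (hcost.add hg2) ?_
        intro z
        have t1 := abs_sub_le z.1.1 z.2.1 z.1.2
        have t2 := abs_sub_le z.2.1 z.2.2 z.1.2
        have t3 : |z.2.2 - z.1.2| = |z.1.2 - z.2.2| := abs_sub_comm _ _
        simp only
        linarith
      rw [integral_add hcost hg2] at hmono
      linarith
  linarith

theorem stmt1 {α : Type*} [MeasurableSpace α] (T : ℕ) (hT : 1 ≤ T)
    -- μ 0 is the out-of-sample domain, μ i for 1 ≤ i ≤ T are the source domains
    (μ : Fin (T + 1) → Measure (α × ℝ))
    (hprob : ∀ i, IsProbabilityMeasure (μ i))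
    -- joint law of (f(x), r) on domain i
    (P : (α → ℝ) → Fin (T + 1) → Measure (ℝ × ℝ))
    (hP : ∀ f i, P f i = (μ i).map (fun p => (f p.1, p.2)))
    -- expected absolute error of f on domain i
    (err : (α → ℝ) → Fin (T + 1) → ℝ)
    (herr : ∀ f i, err f i = ∫ p, |f p.1 - p.2| ∂(μ i))
    -- finite first moments of the joint laws
    (hmom : ∀ f i, Integrable (fun p => |p.1| + |p.2|) (P f i))
    -- the family Ω of admissible prediction functions
    (Ω : Set (α → ℝ)) (hΩmeas : ∀ f ∈ Ω, Measurable f)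
    -- λ* : the ideal joint error, assumed attained on Ω
    (lam : ℝ)
    (hlam : ∃ f ∈ Ω, lam = (1 / (T : ℝ)) * (∑ i : Fin T, err f i.succ) + err f 0)
    (hlam_min : ∀ f ∈ Ω, lam ≤ (1 / (T : ℝ)) * (∑ i : Fin T, err f i.succ) + err f 0) :
    ∀ f ∈ Ω, err f 0 ≤ (1 / (T : ℝ)) * (∑ i : Fin T, err f i.succ)
      + (1 / (T : ℝ)) * (∑ i : Fin T, W1 (P f 0) (P f i.succ)) + 2 * lam := by
  intro f hf
  have hTpos : (0 : ℝ) < T := by exact_mod_cast hT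
  -- err is nonnegative
  have herr_nonneg : ∀ (g : α → ℝ) (i : Fin (T + 1)), 0 ≤ err g i := by
    intro g i
    rw [herr]
    exact integral_nonneg (fun p => abs_nonneg _)
  -- lam ≥ 0
  have hlam_nonneg : 0 ≤ lam := by
    obtain ⟨g, hg, hEq⟩ := hlam
    have h1 : 0 ≤ ∑ i : Fin T, err g i.succ :=
      Finset.sum_nonneg fun i _ => herr_nonneg g i.succ
    have h2 : 0 ≤ err g 0 := herr_nonneg g 0
    have h3 : 0 ≤ (1 / (T : ℝ)) := by positivity
    nlinarith
  -- err f i = ∫ |p.1 - p.2| dP f i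
  have hφ : Measurable (fun p : α × ℝ => (f p.1, p.2)) :=
    ((hΩmeas f hf).comp measurable_fst).prodMk measurable_snd
  have errP : ∀ i, err f i = ∫ p, |p.1 - p.2| ∂(P f i) := by
    intro i
    rw [herr, hP, integral_map hφ.aemeasurable abs_diff_meas.aestronglyMeasurable]
  have hprobP : ∀ i, IsProbabilityMeasure (P f i) := by
    intro i
    rw [hP]
    haveI := hprob i
    exact Measure.isProbabilityMeasure_map hφ.aemeasurable
  -- key per-domain bound
  have key : ∀ i : Fin T, err f 0 ≤ err f i.succ + W1 (P f 0) (P f i.succ) := by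
    intro i
    haveI := hprobP 0
    haveI := hprobP i.succ
    rw [errP 0, errP i.succ]
    exact W1_key _ _ (hmom f 0) (hmom f i.succ)
  -- average
  have hsum : (T : ℝ) * err f 0 ≤ ∑ i : Fin T, (err f i.succ + W1 (P f 0) (P f i.succ)) := by
    calc (T : ℝ) * err f 0 = ∑ _i : Fin T, err f 0 := by
          simp [Finset.sum_const, mul_comm]
      _ ≤ _ := Finset.sum_le_sum fun i _ => key i
  have hmain : err f 0 ≤ (1 / (T : ℝ)) * (∑ i : Fin T, err f i.succ)
      + (1 / (T : ℝ)) * (∑ i : Fin T, W1 (P f 0) (P f i.succ)) := by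
    rw [Finset.sum_add_distrib] at hsum
    rw [div_mul_eq_mul_div, div_mul_eq_mul_div, ← add_div, le_div_iff₀ hTpos,
      one_mul, one_mul]
    linarith [hsum]
  linarith
end

section
/- Let P and Q be two probability measures on ℝ^{K̃} × ℝ of the form: under P, (A, R) = (Z, ZᵀF_P + ε_P), and under Q, (A, R) = (Z, ZᵀF_Q + ε_Q), where Z has the same distribution under both measures with E[Z Zᵀ] = I, and ε_P, ε_Q are integrable noises. Then the order-1 Wasserstein distance induced by the ℓ¹-norm satisfies W¹(P, Q) ≤ E[|ε_P|] + E[|ε_Q|] + √K̃ · ‖F_P − F_Q‖₂. -/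
open MeasureTheory

/-- Order-1 Wasserstein distance on (ℝ^K̃) × ℝ induced by the ℓ¹-norm. -/
noncomputable def W1E (Kt : ℕ) (P Q : Measure (EuclideanSpace ℝ (Fin Kt) × ℝ)) : ℝ :=
  sInf { c : ℝ | ∃ π : Measure ((EuclideanSpace ℝ (Fin Kt) × ℝ) × (EuclideanSpace ℝ (Fin Kt) × ℝ)),
    π.map Prod.fst = P ∧ π.map Prod.snd = Q ∧
    c = ∫ z, ((∑ i, |z.1.1 i - z.2.1 i|) + |z.1.2 - z.2.2|) ∂π }

theorem stmt14 {Ω : Type*} [MeasurableSpace Ω] (μ : Measure Ω) [IsProbabilityMeasure μ]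
    (Kt : ℕ) (hKt : 1 ≤ Kt)
    (Z : Ω → EuclideanSpace ℝ (Fin Kt)) (hZmeas : Measurable Z) (hZL2 : MemLp Z 2 μ)
    (hI : ∀ i j, ∫ ω, Z ω i * Z ω j ∂μ = if i = j then (1 : ℝ) else 0)
    (FP FQ : EuclideanSpace ℝ (Fin Kt))
    (εP εQ : Ω → ℝ) (hεPmeas : Measurable εP) (hεQmeas : Measurable εQ)
    (hεPint : Integrable εP μ) (hεQint : Integrable εQ μ)
    (P Q : Measure (EuclideanSpace ℝ (Fin Kt) × ℝ))
    (hP : P = μ.map (fun ω => (Z ω, (∑ i, Z ω i * FP i) + εP ω)))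
    (hQ : Q = μ.map (fun ω => (Z ω, (∑ i, Z ω i * FQ i) + εQ ω))) :
    W1E Kt P Q ≤ (∫ ω, |εP ω| ∂μ) + (∫ ω, |εQ ω| ∂μ) + Real.sqrt Kt * ‖FP - FQ‖ := by
  classical
  set D : EuclideanSpace ℝ (Fin Kt) := FP - FQ with hD
  -- component measurability and integrability
  have hZi : ∀ i, Measurable (fun ω => Z ω i) := fun i =>
    (EuclideanSpace.proj (𝕜 := ℝ) i).continuous.measurable.comp hZmeas
  have hZi2 : ∀ i, MemLp (fun ω => Z ω i) 2 μ := fun i =>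
    (EuclideanSpace.proj (𝕜 := ℝ) i).comp_memLp' hZL2
  have hZisq : ∀ i, Integrable (fun ω => Z ω i ^ 2) μ := fun i => (hZi2 i).integrable_sq
  have hZiabs : ∀ i, ∫ ω, |Z ω i| ∂μ ≤ 1 := by
    intro i
    have h1 : ∫ ω, (Z ω i ^ 2 + 1) / 2 ∂μ = 1 := by
      rw [integral_div, integral_add (hZisq i) (integrable_const 1)]
      have := hI i i
      simp only [if_pos rfl] at this
      simp [← sq] at this ⊢
      rw [this]
      norm_num
    calc ∫ ω, |Z ω i| ∂μ ≤ ∫ ω, (Z ω i ^ 2 + 1) / 2 ∂μ := by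
          refine integral_mono ((hZi2 i).integrable one_le_two).abs
            (((hZisq i).add (integrable_const 1)).div_const 2) (fun ω => ?_)
          nlinarith [sq_nonneg (|Z ω i| - 1), sq_abs (Z ω i)]
      _ = 1 := h1
  -- the coupling
  set f : Ω → (EuclideanSpace ℝ (Fin Kt) × ℝ) × (EuclideanSpace ℝ (Fin Kt) × ℝ) :=
    fun ω => ((Z ω, (∑ i, Z ω i * FP i) + εP ω), (Z ω, (∑ i, Z ω i * FQ i) + εQ ω)) with hf
  have hSP : Measurable fun ω => (∑ i, Z ω i * FP i) + εP ω :=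
    (Finset.measurable_sum _ fun i _ => (hZi i).mul_const _).add hεPmeas
  have hSQ : Measurable fun ω => (∑ i, Z ω i * FQ i) + εQ ω :=
    (Finset.measurable_sum _ fun i _ => (hZi i).mul_const _).add hεQmeas
  have hfm : Measurable f := ((hZmeas.prodMk hSP).prodMk (hZmeas.prodMk hSQ))
  set π := μ.map f with hπ
  have hfst : π.map Prod.fst = P := by
    rw [hπ, Measure.map_map measurable_fst hfm, hP]; rfl
  have hsnd : π.map Prod.snd = Q := by
    rw [hπ, Measure.map_map measurable_snd hfm, hQ]; rfl
  set cost : (EuclideanSpace ℝ (Fin Kt) × ℝ) × (EuclideanSpace ℝ (Fin Kt) × ℝ) → ℝ :=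
    fun z => (∑ i, |z.1.1 i - z.2.1 i|) + |z.1.2 - z.2.2| with hcost
  have hcostcont : Continuous cost := by
    apply Continuous.add
    · exact continuous_finset_sum _ fun i _ => (Continuous.sub
        ((EuclideanSpace.proj (𝕜 := ℝ) i).continuous.comp (continuous_fst.comp continuous_fst))
        ((EuclideanSpace.proj (𝕜 := ℝ) i).continuous.comp (continuous_fst.comp continuous_snd))).abs
    · exact (Continuous.sub (continuous_snd.comp continuous_fst)
        (continuous_snd.comp continuous_snd)).abs
  have hmem : (∫ z, cost z ∂π) ∈ { c : ℝ | ∃ π' : Measure ((EuclideanSpace ℝ (Fin Kt) × ℝ) × (EuclideanSpace ℝ (Fin Kt) × ℝ)),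
      π'.map Prod.fst = P ∧ π'.map Prod.snd = Q ∧
      c = ∫ z, ((∑ i, |z.1.1 i - z.2.1 i|) + |z.1.2 - z.2.2|) ∂π' } :=
    ⟨π, hfst, hsnd, rfl⟩
  have hbdd : BddBelow { c : ℝ | ∃ π' : Measure ((EuclideanSpace ℝ (Fin Kt) × ℝ) × (EuclideanSpace ℝ (Fin Kt) × ℝ)),
      π'.map Prod.fst = P ∧ π'.map Prod.snd = Q ∧
      c = ∫ z, ((∑ i, |z.1.1 i - z.2.1 i|) + |z.1.2 - z.2.2|) ∂π' } := by
    refine ⟨0, fun c hc => ?_⟩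
    obtain ⟨π', _, _, rfl⟩ := hc
    refine integral_nonneg fun z => ?_
    positivity
  have hle : W1E Kt P Q ≤ ∫ z, cost z ∂π := csInf_le hbdd hmem
  refine hle.trans ?_
  -- rewrite the integral over μ
  have hint : ∫ z, cost z ∂π = ∫ ω, cost (f ω) ∂μ :=
    integral_map hfm.aemeasurable hcostcont.measurable.aestronglyMeasurable
  rw [hint]
  have hcostf : ∀ ω, cost (f ω) = |(∑ i, Z ω i * D i) + (εP ω - εQ ω)| := by
    intro ω
    simp only [hcost, hf]
    rw [show (∑ i, |Z ω i - Z ω i|) = 0 by simp]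
    rw [zero_add]
    congr 1
    have : ∀ i, Z ω i * D i = Z ω i * FP i - Z ω i * FQ i := by
      intro i
      simp [hD, PiLp.sub_apply, mul_sub]
    simp [this, Finset.sum_sub_distrib]
    ring
  -- bound function
  have hsumint : Integrable (fun ω => ∑ i, |Z ω i| * |D i|) μ :=
    integrable_finset_sum _ fun i _ => (((hZi2 i).integrable one_le_two).abs.mul_const _)
  have hgint : Integrable (fun ω => |εP ω| + |εQ ω| + ∑ i, |Z ω i| * |D i|) μ :=
    (hεPint.abs.add hεQint.abs).add hsumint
  have hpt : ∀ ω, cost (f ω) ≤ |εP ω| + |εQ ω| + ∑ i, |Z ω i| * |D i| := by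
    intro ω
    rw [hcostf ω]
    calc |(∑ i, Z ω i * D i) + (εP ω - εQ ω)|
        ≤ |∑ i, Z ω i * D i| + |εP ω - εQ ω| := abs_add_le _ _
      _ ≤ (∑ i, |Z ω i| * |D i|) + (|εP ω| + |εQ ω|) := by
          gcongr
          · exact (Finset.abs_sum_le_sum_abs _ _).trans (by simp [abs_mul])
          · exact abs_sub _ _
      _ = |εP ω| + |εQ ω| + ∑ i, |Z ω i| * |D i| := by ring
  have h1 : ∫ ω, cost (f ω) ∂μ ≤ ∫ ω, (|εP ω| + |εQ ω| + ∑ i, |Z ω i| * |D i|) ∂μ :=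
    integral_mono_of_nonneg (Filter.Eventually.of_forall fun ω => by
      show (0:ℝ) ≤ cost (f ω)
      rw [hcostf ω]; positivity) hgint (Filter.Eventually.of_forall hpt)
  refine h1.trans ?_
  -- compute the bound integral
  have e1 : ∫ ω, (|εP ω| + |εQ ω| + ∑ i, |Z ω i| * |D i|) ∂μ
      = (∫ ω, (|εP ω| + |εQ ω|) ∂μ) + ∫ ω, ∑ i, |Z ω i| * |D i| ∂μ :=
    integral_add (hεPint.abs.add hεQint.abs) hsumint
  have e2 : ∫ ω, (|εP ω| + |εQ ω|) ∂μ = (∫ ω, |εP ω| ∂μ) + ∫ ω, |εQ ω| ∂μ :=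
    integral_add hεPint.abs hεQint.abs
  have e3 : ∫ ω, ∑ i, |Z ω i| * |D i| ∂μ = ∑ i, ∫ ω, |Z ω i| * |D i| ∂μ :=
    integral_finset_sum _ fun i _ => (((hZi2 i).integrable one_le_two).abs.mul_const _)
  have e4 : ∀ i, ∫ ω, |Z ω i| * |D i| ∂μ = (∫ ω, |Z ω i| ∂μ) * |D i| := fun i =>
    integral_mul_const _ _
  rw [e1, e2, e3]
  simp_rw [e4]
  gcongr
  calc ∑ i, (∫ ω, |Z ω i| ∂μ) * |D i| ≤ ∑ i, |D i| :=
        Finset.sum_le_sum fun i _ => mul_le_of_le_one_left (abs_nonneg _) (hZiabs i)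
    _ ≤ Real.sqrt Kt * ‖FP - FQ‖ := by
        rw [← hD]
        have hsq : (∑ i, |D i|) ^ 2 ≤ Kt * ∑ i, |D i| ^ 2 := by
          simpa using sq_sum_le_card_mul_sum_sq (s := Finset.univ) (f := fun i => |D i|)
        have hnorm : ‖D‖ = Real.sqrt (∑ i, |D i| ^ 2) := by
          rw [EuclideanSpace.norm_eq]
          simp [Real.norm_eq_abs]
        have h0 : (0:ℝ) ≤ ∑ i, |D i| := Finset.sum_nonneg fun i _ => abs_nonneg _
        have := Real.sqrt_le_sqrt hsq
        rw [Real.sqrt_sq h0] at this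
        rw [hnorm, ← Real.sqrt_mul (Nat.cast_nonneg Kt)]
        exact this
end
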